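/- Let n and m be large enough to guarantee the existence of asymmetric graphs on n vertices and on m vertices. Let Φ be any vertex nomination scheme, 𝔬 an obfuscating function, and (ε_i)_{i=1}^m a strictly increasing sequence with ε_i ∈ (0, i/m) for each i. Then there exists a probability distribution F on pairs of graphs on V₁ and V₂ with c = min(n,m) core vertices and a vertex v* ∈ C such that for every k ∈ {1,…,c−1}: L*_k(v*) ≤ ε_{m−k} < 1 − k/m < 1 − ε_k ≤ L_k(Φ, v*), where 1 − k/m represents chance performance. -/

import Mathlib

open Filter MeasureTheory
open scoped ENNReal

namespace VN

/-- `w` lies in the automorphism orbit `I(u;g)` of `u` in the graph `g`. -/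
def InOrbit {V : Type*} (g : SimpleGraph V) (u w : V) : Prop :=
  ∃ σ : SimpleGraph.Iso g g, σ u = w

/-- A graph is asymmetric if its only automorphism is the identity. -/
def IsAsym {V : Type*} (g : SimpleGraph V) : Prop :=
  ∀ σ : SimpleGraph.Iso g g, ∀ v, σ v = v

/-- The obfuscated graph `𝔬(g₂)`: relabel the vertices of `g₂` along the bijection `o`. -/
def obf {m : ℕ} {W : Type*} (o : Fin m ≃ W) (g : SimpleGraph (Fin m)) : SimpleGraph W :=
  SimpleGraph.map o.toEmbedding g

/-- The (1-indexed) rank of `w` in the total ordering of `W` encoded by `T : W ≃ Fin m`. -/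
def vnRank {m : ℕ} {W : Type*} (T : W ≃ Fin m) (w : W) : ℕ := (T w).val + 1

/-- A vertex nomination scheme: to each graph `g₁` on `V₁ = Fin n`, obfuscated graph on `W`,
and vertex of interest in `V₁`, it assigns a total ordering of `W` (encoded as `W ≃ Fin m`),
subject to the consistency property: the set of ranks assigned to the image of each
automorphism orbit of `g₂` does not depend on the obfuscating function used. -/
structure VNScheme (n m : ℕ) (W : Type*) where
  toFun : SimpleGraph (Fin n) → SimpleGraph W → Fin n → (W ≃ Fin m)
  consistent : ∀ (g₁ : SimpleGraph (Fin n)) (g₂ : SimpleGraph (Fin m))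
      (v : Fin n) (o₁ o₂ : Fin m ≃ W) (u : Fin m),
      {r : ℕ | ∃ w, InOrbit g₂ u w ∧ vnRank (toFun g₁ (obf o₁ g₂) v) (o₁ w) = r} =
      {r : ℕ | ∃ w, InOrbit g₂ u w ∧ vnRank (toFun g₁ (obf o₂ g₂) v) (o₂ w) = r}

/-- The level-`k` error `L_k(Φ, v*)` of the scheme `Φ` at the vertex of interest `v` (whose
corresponding vertex in the second graph is `u`), with respect to the distribution `F` on
pairs of graphs and the obfuscating function `o`. -/
noncomputable def vnError {n m : ℕ} {W : Type*}
    (F : PMF (SimpleGraph (Fin n) × SimpleGraph (Fin m)))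
    (Φ : VNScheme n m W) (o : Fin m ≃ W) (v : Fin n) (u : Fin m) (k : ℕ) : ℝ :=
  (F.toOuterMeasure {p | k + 1 ≤ vnRank (Φ.toFun p.1 (obf o p.2) v) (o u)}).toReal

/-- The level-`k` Bayes error `L*_k(v*)`: the infimum of the level-`k` errors over all
vertex nomination schemes. -/
noncomputable def bayesError (n m : ℕ) (W : Type*)
    (F : PMF (SimpleGraph (Fin n) × SimpleGraph (Fin m)))
    (o : Fin m ≃ W) (v : Fin n) (u : Fin m) (k : ℕ) : ℝ :=
  ⨅ Φ : VNScheme n m W, vnError F Φ o v u k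

end VN

namespace VNAux
open VN SimpleGraph

lemma toEmb_trans {α β γ : Type*} (e : α ≃ β) (f : β ≃ γ) :
    (e.trans f).toEmbedding = e.toEmbedding.trans f.toEmbedding := rfl

lemma obf_map {m : ℕ} {W : Type*} (o : Fin m ≃ W) (τ : Equiv.Perm (Fin m))
    (g : SimpleGraph (Fin m)) :
    obf o (g.map τ.toEmbedding) = obf (τ.trans o) g := by
  simp [obf, SimpleGraph.map_map, toEmb_trans]

lemma isAsym_of_iso {α β : Type*} {g : SimpleGraph α} {h : SimpleGraph β}
    (e : g ≃g h) (ha : IsAsym g) : IsAsym h := by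
  intro σ x
  have h1 := ha ((e.trans σ).trans e.symm) (e.symm x)
  have : σ (e (e.symm x)) = e (e.symm x) := by
    have := congrArg e h1
    simpa using this
  simpa using this

lemma inOrbit_iff {α : Type*} {g : SimpleGraph α} (ha : IsAsym g) (u w : α) :
    InOrbit g u w ↔ w = u := by
  constructor
  · rintro ⟨σ, hσ⟩; rw [← hσ, ha σ u]
  · rintro rfl; exact ⟨Iso.refl, rfl⟩

lemma obf_inj {m : ℕ} {W : Type*} {g : SimpleGraph (Fin m)} (ha : IsAsym g)
    {o₁ o₂ : Fin m ≃ W} (h : obf o₁ g = obf o₂ g) : o₁ = o₂ := by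
  have key : ∀ a b, g.Adj (o₂.symm (o₁ a)) (o₂.symm (o₁ b)) ↔ g.Adj a b := by
    intro a b
    have h2 : ∀ x y, (obf o₂ g).Adj (o₂ x) (o₂ y) ↔ g.Adj x y := fun x y =>
      (SimpleGraph.Iso.map o₂ g).map_rel_iff (a := x) (b := y)
    have h1 : ∀ x y, (obf o₁ g).Adj (o₁ x) (o₁ y) ↔ g.Adj x y := fun x y =>
      (SimpleGraph.Iso.map o₁ g).map_rel_iff (a := x) (b := y)
    rw [← h2 (o₂.symm (o₁ a)) (o₂.symm (o₁ b))]
    simp only [Equiv.apply_symm_apply]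
    rw [← h, h1]
  let σ : g ≃g g := ⟨o₁.trans o₂.symm, by intro a b; exact key a b⟩
  have := ha σ
  ext a
  have h3 := this a
  have : o₂.symm (o₁ a) = a := h3
  calc o₁ a = o₂ (o₂.symm (o₁ a)) := (o₂.apply_symm_apply _).symm
    _ = o₂ a := by rw [this]

lemma map_equiv_cancel {α β : Type*} (e : α ≃ β) (g : SimpleGraph α) :
    (g.map e.toEmbedding).map e.symm.toEmbedding = g := by
  rw [SimpleGraph.map_map]
  have : e.toEmbedding.trans e.symm.toEmbedding = Function.Embedding.refl α := by
    ext x; simp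
  have h' : (⇑e.symm.toEmbedding ∘ ⇑e.toEmbedding) = id := by ext x; simp
  rw [h']
  ext a b
  simp [SimpleGraph.map_adj]

end VNAux

namespace VNAux2
open VN SimpleGraph VNAux

lemma phi_rank {n m : ℕ} {W : Type} (Φ : VN.VNScheme n m W) (g₁ : SimpleGraph (Fin n))
    {g₂ : SimpleGraph (Fin m)} (hg₂ : IsAsym g₂) (o : Fin m ≃ W) (v : Fin n)
    (τ : Equiv.Perm (Fin m)) (w : Fin m) :
    vnRank (Φ.toFun g₁ (obf o (g₂.map τ.toEmbedding)) v) (o (τ w)) =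
    vnRank (Φ.toFun g₁ (obf o g₂) v) (o w) := by
  have hc := Φ.consistent g₁ g₂ v (τ.trans o) o w
  have hmem : vnRank (Φ.toFun g₁ (obf (τ.trans o) g₂) v) ((τ.trans o) w) ∈
      {r : ℕ | ∃ w', InOrbit g₂ w w' ∧
        vnRank (Φ.toFun g₁ (obf (τ.trans o) g₂) v) ((τ.trans o) w') = r} :=
    ⟨w, (inOrbit_iff hg₂ w w).2 rfl, rfl⟩
  rw [hc] at hmem
  obtain ⟨w', hw', hr⟩ := hmem
  rw [(inOrbit_iff hg₂ w w').1 hw'] at hr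
  rw [obf_map]
  exact hr.symm

lemma exists_good_scheme {n m : ℕ} {W : Type} (Φ : VN.VNScheme n m W)
    {g₂ : SimpleGraph (Fin m)} (hg₂ : IsAsym g₂) (Tfix : Fin m ≃ Fin m) :
    ∃ Ψ : VN.VNScheme n m W, ∀ (a : SimpleGraph (Fin n)) (b : Fin n) (o' : Fin m ≃ W),
      Ψ.toFun a (obf o' g₂) b = o'.symm.trans Tfix := by
  classical
  refine ⟨⟨fun a h b => if hc : ∃ o'' : Fin m ≃ W, h = obf o'' g₂
      then hc.choose.symm.trans Tfix else Φ.toFun a h b, ?_⟩, ?_⟩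
  · intro a g₂' b o₁ o₂ u'
    by_cases hex : ∃ π : Equiv.Perm (Fin m), g₂' = g₂.map π.toEmbedding
    · obtain ⟨π, rfl⟩ := hex
      have hasym : IsAsym (g₂.map π.toEmbedding) :=
        isAsym_of_iso (SimpleGraph.Iso.map π g₂) hg₂
      have hval : ∀ (o' : Fin m ≃ W)
          (hc : ∃ o'', obf o' (g₂.map π.toEmbedding) = obf o'' g₂),
          vnRank (hc.choose.symm.trans Tfix) (o' u') = (Tfix (π.symm u')).val + 1 := by
        intro o' hc
        have hch : hc.choose = π.trans o' :=
          obf_inj hg₂ (hc.choose_spec.symm.trans (obf_map _ _ _))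
        rw [hch]
        simp [vnRank]
      have hc₁ : ∃ o'', obf o₁ (g₂.map π.toEmbedding) = obf o'' g₂ :=
        ⟨π.trans o₁, obf_map _ _ _⟩
      have hc₂ : ∃ o'', obf o₂ (g₂.map π.toEmbedding) = obf o'' g₂ :=
        ⟨π.trans o₂, obf_map _ _ _⟩
      have hone : ∀ (o' : Fin m ≃ W)
          (hc : ∃ o'', obf o' (g₂.map π.toEmbedding) = obf o'' g₂),
          {r : ℕ | ∃ w, InOrbit (g₂.map π.toEmbedding) u' w ∧
            vnRank (hc.choose.symm.trans Tfix) (o' w) = r} =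
          {(Tfix (π.symm u')).val + 1} := by
        intro o' hc
        ext r
        simp only [Set.mem_setOf_eq, Set.mem_singleton_iff]
        constructor
        · rintro ⟨w, hw, rfl⟩
          rw [(inOrbit_iff hasym u' w).1 hw]
          exact hval o' hc
        · rintro rfl
          exact ⟨u', (inOrbit_iff hasym u' u').2 rfl, hval o' hc⟩
      simp only [dif_pos hc₁, dif_pos hc₂]
      rw [hone o₁ hc₁, hone o₂ hc₂]
    · have hnc : ∀ o' : Fin m ≃ W, ¬∃ o'' : Fin m ≃ W, obf o' g₂' = obf o'' g₂ := by
        rintro o' ⟨o'', h⟩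
        apply hex
        refine ⟨o''.trans o'.symm, ?_⟩
        have h2 : (g₂'.map o'.toEmbedding).map o'.symm.toEmbedding =
            (g₂.map o''.toEmbedding).map o'.symm.toEmbedding := by
          exact congrArg (SimpleGraph.map o'.symm.toEmbedding) h
        rw [map_equiv_cancel] at h2
        rw [h2, SimpleGraph.map_map]
        rfl
      simp only [dif_neg (hnc o₁), dif_neg (hnc o₂)]
      exact Φ.consistent a g₂' b o₁ o₂ u'
  · intro a b o'
    have hc : ∃ o'' : Fin m ≃ W, obf o' g₂ = obf o'' g₂ := ⟨o', rfl⟩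
    simp only [dif_pos hc]
    have hch : hc.choose = o' := obf_inj hg₂ hc.choose_spec.symm
    rw [hch]

end VNAux2

/-- Suppose asymmetric graphs exist on `n` and on `m` vertices. For any vertex
nomination scheme `Φ`, any obfuscating function `𝔬`, and any strictly increasing sequence
`(ε_i)_{i=1}^m` with `ε_i ∈ (0, i/m)`, there is a distribution `F` on pairs of graphs with
`c = min n m` core vertices and a vertex of interest `v* ∈ C` (with corresponding vertex `u` in
the second graph) such that for every `k ∈ {1,…,c−1}`:
`L*_k(v*) ≤ ε_{m−k} < 1 − k/m < 1 − ε_k ≤ L_k(Φ, v*)`. -/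
theorem arbitrarily_poor_performance
    {n m : ℕ}
    (hgn : ∃ g : SimpleGraph (Fin n), VN.IsAsym g)
    (hgm : ∃ g : SimpleGraph (Fin m), VN.IsAsym g)
    (hn : 1 ≤ n) (hm : 1 ≤ m)
    {W : Type} (hW : Nonempty (Fin m ≃ W))
    (Φ : VN.VNScheme n m W) (o : Fin m ≃ W)
    (ε : ℕ → ℝ)
    (hε : ∀ i, 1 ≤ i → i ≤ m → 0 < ε i ∧ ε i < (i : ℝ) / m)
    (hεmono : ∀ i j, 1 ≤ i → i < j → j ≤ m → ε i < ε j) :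
    ∃ (F : PMF (SimpleGraph (Fin n) × SimpleGraph (Fin m))) (v : Fin n) (u : Fin m),
      (v : ℕ) < min n m ∧ (u : ℕ) = (v : ℕ) ∧
      ∀ k : ℕ, 1 ≤ k → k ≤ min n m - 1 →
        VN.bayesError n m W F o v u k ≤ ε (m - k) ∧
        ε (m - k) < 1 - (k : ℝ) / m ∧
        1 - (k : ℝ) / m < 1 - ε k ∧
        1 - ε k ≤ VN.vnError F Φ o v u k := by
  classical
  obtain ⟨g₁, hg₁⟩ := hgn
  obtain ⟨g₂, hg₂⟩ := hgm
  set v : Fin n := ⟨0, hn⟩ with hv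
  set u : Fin m := ⟨0, hm⟩ with hu
  set R : Fin m ≃ Fin m := o.trans (Φ.toFun g₁ (VN.obf o g₂) v) with hR
  set E : ℕ → ℝ := fun t => if t = 0 then 0 else if t < m then ε t else 1 with hEdef
  have hE0 : E 0 = 0 := by simp [hEdef]
  have hEm : E m = 1 := by simp [hEdef]; omega
  have hEk : ∀ k, 1 ≤ k → k < m → E k = ε k := by
    intro k h1 h2; simp only [hEdef]; rw [if_neg (by omega), if_pos h2]
  have hmonoE : ∀ i : ℕ, i < m → E i ≤ E (i + 1) := by
    intro i hi
    rcases Nat.eq_zero_or_pos i with rfl | hpos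
    · rw [hE0]
      rcases lt_or_ge 1 m with h | h
      · rw [hEk 1 le_rfl h]; exact (hε 1 le_rfl (by omega)).1.le
      · have : m = 1 := by omega
        subst this; rw [hEm]; norm_num
    · rw [hEk i hpos hi]
      rcases lt_or_ge (i + 1) m with h | h
      · rw [hEk (i + 1) (by omega) h]
        exact (hεmono i (i + 1) hpos (by omega) (by omega)).le
      · have : i + 1 = m := by omega
        rw [this, hEm]
        have h2 := (hε i hpos hi.le).2
        have : (i : ℝ) / m ≤ 1 := by
          rw [div_le_one (by positivity)]
          exact_mod_cast hi.le
        linarith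
  set gw : Fin m → ℝ := fun j => E (j.val + 1) - E j.val with hgwdef
  have hgw0 : ∀ j : Fin m, 0 ≤ gw j := fun j => sub_nonneg.2 (hmonoE j.val j.isLt)
  have hrange : ∀ t : ℕ, ∑ i ∈ Finset.range t, (E (i + 1) - E i) = E t := by
    intro t; rw [Finset.sum_range_sub E t, hE0, sub_zero]
  have hsum : ∑ j : Fin m, gw j = 1 := by
    rw [hgwdef]
    rw [Fin.sum_univ_eq_sum_range (fun i => E (i + 1) - E i) m, hrange, hEm]
  set q : PMF (Fin m) := PMF.ofFintype (fun j => ENNReal.ofReal (gw j)) (by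
    rw [← ENNReal.ofReal_sum_of_nonneg (fun j _ => hgw0 j), hsum, ENNReal.ofReal_one]) with hq
  set f : Fin m → SimpleGraph (Fin n) × SimpleGraph (Fin m) :=
    fun j => (g₁, g₂.map (Equiv.swap (R.symm j) u).toEmbedding) with hf
  set F : PMF (SimpleGraph (Fin n) × SimpleGraph (Fin m)) := q.map f with hF
  refine ⟨F, v, u, by simp [hv]; omega, rfl, ?_⟩
  -- error formula
  have herr : ∀ (Ψ' : VN.VNScheme n m W) (k : ℕ),
      VN.vnError F Ψ' o v u k =
        ∑ j : Fin m, (if k + 1 ≤ VN.vnRank (Ψ'.toFun (f j).1 (VN.obf o (f j).2) v) (o u)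
          then gw j else 0) := by
    intro Ψ' k
    unfold VN.vnError
    rw [hF, PMF.toOuterMeasure_map_apply, PMF.toOuterMeasure_apply_fintype]
    rw [ENNReal.toReal_sum (by
      intro a _
      rw [Set.indicator_apply]
      split
      · exact ENNReal.ofReal_ne_top
      · exact ENNReal.zero_ne_top)]
    refine Finset.sum_congr rfl fun j _ => ?_
    rw [Set.indicator_apply]
    simp only [Set.mem_preimage, Set.mem_setOf_eq]
    by_cases hj : k + 1 ≤ VN.vnRank (Ψ'.toFun (f j).1 (VN.obf o (f j).2) v) (o u)
    · rw [if_pos hj, if_pos hj]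
      show (q j).toReal = gw j
      rw [hq, PMF.ofFintype_apply]
      exact ENNReal.toReal_ofReal (hgw0 j)
    · rw [if_neg hj, if_neg hj, ENNReal.toReal_zero]
  -- rank of Φ on pair j
  have hswap : ∀ j : Fin m, o u = o ((Equiv.swap (R.symm j) u) (R.symm j)) := by
    intro j; rw [Equiv.swap_apply_left]
  have hΦrank : ∀ j : Fin m,
      VN.vnRank (Φ.toFun (f j).1 (VN.obf o (f j).2) v) (o u) = j.val + 1 := by
    intro j
    show VN.vnRank (Φ.toFun g₁ (VN.obf o (g₂.map (Equiv.swap (R.symm j) u).toEmbedding)) v)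
      (o u) = j.val + 1
    rw [hswap j, VNAux2.phi_rank Φ g₁ hg₂ o v (Equiv.swap (R.symm j) u) (R.symm j)]
    show (Φ.toFun g₁ (VN.obf o g₂) v (o (R.symm j))).val + 1 = j.val + 1
    have : Φ.toFun g₁ (VN.obf o g₂) v (o (R.symm j)) = j := R.apply_symm_apply j
    rw [this]
  -- the good scheme
  obtain ⟨Ψ, hΨ⟩ := VNAux2.exists_good_scheme (n := n) Φ hg₂ (R.trans Fin.revPerm)
  have hΨrank : ∀ j : Fin m,
      VN.vnRank (Ψ.toFun (f j).1 (VN.obf o (f j).2) v) (o u) = m - j.val := by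
    intro j
    show VN.vnRank (Ψ.toFun g₁ (VN.obf o (g₂.map (Equiv.swap (R.symm j) u).toEmbedding)) v)
      (o u) = m - j.val
    rw [hswap j, VNAux2.phi_rank Ψ g₁ hg₂ o v (Equiv.swap (R.symm j) u) (R.symm j),
      hΨ g₁ v o]
    show (((o.symm.trans (R.trans Fin.revPerm))) (o (R.symm j))).val + 1 = m - j.val
    simp only [Equiv.trans_apply, Equiv.symm_apply_apply, Equiv.apply_symm_apply]
    show (Fin.rev j).val + 1 = m - j.val
    rw [Fin.val_rev]
    omega
  -- sum computations
  have hS1 : ∀ k : ℕ, 1 ≤ k → k < m →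
      ∑ j : Fin m, (if k + 1 ≤ j.val + 1 then gw j else 0) = 1 - ε k := by
    intro k h1 h2
    rw [hgwdef]
    rw [Fin.sum_univ_eq_sum_range (fun i => if k + 1 ≤ i + 1 then E (i + 1) - E i else 0) m]
    rw [← Finset.sum_filter]
    have : (Finset.range m).filter (fun i => k + 1 ≤ i + 1) = Finset.Ico k m := by
      ext i; simp only [Finset.mem_filter, Finset.mem_range, Finset.mem_Ico]; omega
    rw [this, Finset.sum_Ico_eq_sub _ h2.le, hrange, hrange, hEm, hEk k h1 h2]
  have hS2 : ∀ k : ℕ, 1 ≤ k → k < m →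
      ∑ j : Fin m, (if k + 1 ≤ m - j.val then gw j else 0) = ε (m - k) := by
    intro k h1 h2
    rw [hgwdef]
    rw [Fin.sum_univ_eq_sum_range (fun i => if k + 1 ≤ m - i then E (i + 1) - E i else 0) m]
    rw [← Finset.sum_filter]
    have : (Finset.range m).filter (fun i => k + 1 ≤ m - i) = Finset.range (m - k) := by
      ext i; simp only [Finset.mem_filter, Finset.mem_range]; omega
    rw [this, hrange, hEk (m - k) (by omega) (by omega)]
  -- conclusion
  intro k hk1 hk2
  have hminm := Nat.min_le_right n m
  have hkm : k < m := by omega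
  have hΦerr : VN.vnError F Φ o v u k = 1 - ε k := by
    rw [herr Φ k]
    rw [Finset.sum_congr rfl fun j _ => by rw [hΦrank j]]
    exact hS1 k hk1 hkm
  have hΨerr : VN.vnError F Ψ o v u k = ε (m - k) := by
    rw [herr Ψ k]
    rw [Finset.sum_congr rfl fun j _ => by rw [hΨrank j]]
    exact hS2 k hk1 hkm
  have hbayes : VN.bayesError n m W F o v u k ≤ ε (m - k) := by
    rw [← hΨerr]
    exact ciInf_le ⟨0, by rintro x ⟨Ψ', rfl⟩; exact ENNReal.toReal_nonneg⟩ Ψ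
  have hmpos : (0 : ℝ) < m := by exact_mod_cast hm
  have hεmk := hε (m - k) (by omega) (by omega)
  have hεk := hε k hk1 (by omega)
  have hcast : ((m - k : ℕ) : ℝ) = (m : ℝ) - k := by
    rw [Nat.cast_sub hkm.le]
  refine ⟨hbayes, ?_, ?_, ?_⟩
  · have := hεmk.2
    rw [hcast] at this
    have heq : ((m : ℝ) - k) / m = 1 - (k : ℝ) / m := by field_simp
    linarith [heq ▸ this]
  · have := hεk.2
    linarith
  · rw [hΦerr]
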